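/- arXiv:1409.7808 — 2 statements merged into one kernel-verified Lean document; each statement's English description precedes it below -/
import Mathlib

section
/- Let f:[0,N]→ℝ with f(x) = (e₁x + e₂x²)/(Λ + c₀x), where Λ, c₀ > 0, e₁, e₂ ≥ 0 and Λe₂ ≥ c₀e₁, and let X be a random variable in [0,N] with mean μ. Then E[f(X)] ≤ f(μ) + f''(0)·Var(X)/2, where f''(0) = 2(Λe₂ - c₀e₁)/Λ². -/
lemma ptwise (Λ c₀ e₁ e₂ x m : ℝ) (hΛ : 0 < Λ) (hc₀ : 0 < c₀)
    (hK : c₀ * e₁ ≤ Λ * e₂) (hx : 0 ≤ x) (hm : 0 ≤ m) :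
    (e₁ * x + e₂ * x ^ 2) / (Λ + c₀ * x) ≤
      (e₁ * m + e₂ * m ^ 2) / (Λ + c₀ * m)
      + (e₁ * Λ + 2 * e₂ * Λ * m + e₂ * c₀ * m ^ 2) / (Λ + c₀ * m) ^ 2 * (x - m)
      + ((Λ * e₂ - c₀ * e₁) / Λ ^ 2) * (x - m) ^ 2 := by
  have ha : 0 < Λ + c₀ * x := by positivity
  have hb : 0 < Λ + c₀ * m := by positivity
  rw [← sub_nonneg]
  have key : (e₁ * m + e₂ * m ^ 2) / (Λ + c₀ * m)
      + (e₁ * Λ + 2 * e₂ * Λ * m + e₂ * c₀ * m ^ 2) / (Λ + c₀ * m) ^ 2 * (x - m)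
      + ((Λ * e₂ - c₀ * e₁) / Λ ^ 2) * (x - m) ^ 2
      - (e₁ * x + e₂ * x ^ 2) / (Λ + c₀ * x)
      = (Λ * e₂ - c₀ * e₁) * (x - m) ^ 2 *
        ((Λ + c₀ * x) * (Λ + c₀ * m) ^ 2 - Λ ^ 3) /
        (Λ ^ 2 * ((Λ + c₀ * x) * (Λ + c₀ * m) ^ 2)) := by
    field_simp
    ring
  rw [key]
  have h1 : 0 ≤ Λ * e₂ - c₀ * e₁ := by linarith
  have hax : Λ ≤ Λ + c₀ * x := by nlinarith
  have hbm : Λ ^ 2 ≤ (Λ + c₀ * m) ^ 2 := by nlinarith [mul_nonneg hc₀.le hm, sq_nonneg (c₀ * m), mul_nonneg (mul_nonneg hΛ.le hc₀.le) hm]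
  have h2 : 0 ≤ (Λ + c₀ * x) * (Λ + c₀ * m) ^ 2 - Λ ^ 3 := by
    nlinarith [mul_le_mul hax hbm (by positivity : (0:ℝ) ≤ Λ ^ 2) ha.le]
  positivity

open MeasureTheory

theorem stmt_3 {Ω : Type*} [MeasurableSpace Ω] (μ : Measure Ω) [IsProbabilityMeasure μ]
    (N Λ c₀ e₁ e₂ : ℝ) (hN : 0 < N) (hΛ : 0 < Λ) (hc₀ : 0 < c₀)
    (he₁ : 0 ≤ e₁) (he₂ : 0 ≤ e₂) (hΛe : c₀ * e₁ ≤ Λ * e₂)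
    (X : Ω → ℝ) (hX : Integrable X μ) (hX2 : Integrable (fun ω => X ω ^ 2) μ)
    (hbdd : ∀ᵐ ω ∂μ, X ω ∈ Set.Icc 0 N) :
    (∫ ω, (e₁ * X ω + e₂ * X ω ^ 2) / (Λ + c₀ * X ω) ∂μ) ≤
      (e₁ * (∫ ω, X ω ∂μ) + e₂ * (∫ ω, X ω ∂μ) ^ 2) / (Λ + c₀ * (∫ ω, X ω ∂μ)) +
        (2 * (Λ * e₂ - c₀ * e₁) / Λ ^ 2) *
          (∫ ω, (X ω - ∫ ω', X ω' ∂μ) ^ 2 ∂μ) / 2 := by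
  set m : ℝ := ∫ ω, X ω ∂μ with hmdef
  have hm : 0 ≤ m := integral_nonneg_of_ae (hbdd.mono fun ω hω => hω.1)
  set C : ℝ := (e₁ * Λ + 2 * e₂ * Λ * m + e₂ * c₀ * m ^ 2) / (Λ + c₀ * m) ^ 2 with hCdef
  set D : ℝ := (Λ * e₂ - c₀ * e₁) / Λ ^ 2 with hDdef
  -- integrabilities
  have h1 : Integrable (fun ω => X ω - m) μ := hX.sub (integrable_const m)
  have h2 : Integrable (fun ω => (X ω - m) ^ 2) μ := by
    have : (fun ω => (X ω - m) ^ 2) = fun ω => X ω ^ 2 - (2 * m) * X ω + m ^ 2 := by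
      funext ω; ring
    rw [this]
    exact (hX2.sub (hX.const_mul (2 * m))).add (integrable_const _)
  have hfae : AEStronglyMeasurable (fun ω => (e₁ * X ω + e₂ * X ω ^ 2) / (Λ + c₀ * X ω)) μ := by
    have hXm := hX.aemeasurable
    exact (((hXm.const_mul e₁).add ((hXm.mul hXm).const_mul e₂)).div
      ((hXm.const_mul c₀).const_add Λ)).aestronglyMeasurable.congr
      (Filter.EventuallyEq.of_eq (by funext ω; simp only [Pi.add_apply, Pi.div_apply, Pi.mul_apply]; ring))
  have hf : Integrable (fun ω => (e₁ * X ω + e₂ * X ω ^ 2) / (Λ + c₀ * X ω)) μ := by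
    refine Integrable.mono' (integrable_const ((e₁ * N + e₂ * N ^ 2) / Λ)) hfae ?_
    filter_upwards [hbdd] with ω hω
    have hx0 := hω.1
    have hxN := hω.2
    have hden : 0 < Λ + c₀ * X ω := by positivity
    rw [Real.norm_eq_abs, abs_of_nonneg (by positivity)]
    have hxx : X ω ^ 2 ≤ N ^ 2 := by nlinarith
    apply div_le_div₀ (by positivity)
      (by nlinarith [mul_le_mul_of_nonneg_left hxN he₁, mul_le_mul_of_nonneg_left hxx he₂])
      hΛ (by nlinarith)
  have hg : Integrable (fun ω => (e₁ * m + e₂ * m ^ 2) / (Λ + c₀ * m)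
      + C * (X ω - m) + D * (X ω - m) ^ 2) μ :=
    ((integrable_const _).add (h1.const_mul C)).add (h2.const_mul D)
  have hzero : ∫ ω, (X ω - m) ∂μ = 0 := by
    rw [integral_sub hX (integrable_const m), integral_const]
    simp [hmdef]
  calc (∫ ω, (e₁ * X ω + e₂ * X ω ^ 2) / (Λ + c₀ * X ω) ∂μ)
      ≤ ∫ ω, ((e₁ * m + e₂ * m ^ 2) / (Λ + c₀ * m)
          + C * (X ω - m) + D * (X ω - m) ^ 2) ∂μ := by
        refine integral_mono_ae hf hg ?_
        filter_upwards [hbdd] with ω hω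
        exact ptwise Λ c₀ e₁ e₂ (X ω) m hΛ hc₀ hΛe hω.1 hm
    _ = (e₁ * m + e₂ * m ^ 2) / (Λ + c₀ * m)
          + C * (∫ ω, (X ω - m) ∂μ) + D * (∫ ω, (X ω - m) ^ 2 ∂μ) := by
        have hB : Integrable (fun ω => C * (X ω - m)) μ := h1.const_mul C
        have hD2 : Integrable (fun ω => D * (X ω - m) ^ 2) μ := h2.const_mul D
        have hA : Integrable (fun ω => (e₁ * m + e₂ * m ^ 2) / (Λ + c₀ * m)
            + C * (X ω - m)) μ := (integrable_const _).add hB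
        rw [integral_add hA hD2, integral_add (integrable_const _) hB,
          integral_const, integral_const_mul, integral_const_mul]
        simp
    _ = (e₁ * m + e₂ * m ^ 2) / (Λ + c₀ * m)
          + (2 * (Λ * e₂ - c₀ * e₁) / Λ ^ 2) * (∫ ω, (X ω - m) ^ 2 ∂μ) / 2 := by
        rw [hzero, hDdef]; ring
end

section
/- Let a ~ N(μ_a, σ_a²) and let y = a + ε with ε ~ N(0, τ²) independent of a. Let (a', y') be a second independent pair with a' ≡ 0, i.e., y' ~ N(0, τ²). For fixed prior weights p, p' > 0, the Bayes-optimal decision region {y : p·φ(y; μ_a, σ_a²+τ²) ≥ p'·φ(y; 0, τ²)} for deciding between the two models consists of points where the posterior probabilities are equal on the boundary, and the probability of correct classification P_correct = p∫_{R} φ(y; μ_a, σ_a²+τ²)dy + p'∫_{Rᶜ} φ(y; 0, τ²)dy is monotonically nondecreasing as τ² decreases, provided μ_a > 0. -/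
open MeasureTheory
open scoped Convolution

/-- The Gaussian probability density with mean `m` and variance `v`. -/
noncomputable def gaussPdf (m v y : ℝ) : ℝ :=
  (Real.sqrt (2 * Real.pi * v))⁻¹ * Real.exp (-((y - m) ^ 2) / (2 * v))

/-- The probability of correct MAP classification between class 2
(observation density `N(μa, σa² + t)`) and class 1 (density `N(0, t)`),
with prior weights `p` and `p'`, where `R` is the Bayes decision region
for class 2. -/
noncomputable def Pcorrect (μa σa2 p p' t : ℝ) : ℝ :=
  p * (∫ y in {y : ℝ | p' * gaussPdf 0 t y ≤ p * gaussPdf μa (σa2 + t) y},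
        gaussPdf μa (σa2 + t) y) +
  p' * (∫ y in {y : ℝ | p' * gaussPdf 0 t y ≤ p * gaussPdf μa (σa2 + t) y}ᶜ,
        gaussPdf 0 t y)

lemma gaussPdf_eq (m : ℝ) {v : ℝ} (hv : 0 ≤ v) :
    gaussPdf m v = ProbabilityTheory.gaussianPDFReal m ⟨v, hv⟩ := by
  ext y
  simp [gaussPdf, ProbabilityTheory.gaussianPDFReal, neg_div]
  rfl

lemma gaussPdf_nonneg (m : ℝ) {v : ℝ} (hv : 0 ≤ v) (y : ℝ) : 0 ≤ gaussPdf m v y := by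
  rw [gaussPdf_eq m hv]; exact ProbabilityTheory.gaussianPDFReal_nonneg _ _ _

lemma gaussPdf_integrable (m : ℝ) {v : ℝ} (hv : 0 ≤ v) :
    MeasureTheory.Integrable (gaussPdf m v) := by
  rw [gaussPdf_eq m hv]; exact ProbabilityTheory.integrable_gaussianPDFReal _ _

lemma gaussPdf_integral (m : ℝ) {v : ℝ} (hv : 0 < v) : ∫ y, gaussPdf m v y = 1 := by
  rw [gaussPdf_eq m hv.le]
  exact ProbabilityTheory.integral_gaussianPDFReal_eq_one m
    (by intro h; exact hv.ne' (congrArg NNReal.toReal h))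

lemma gaussPdf_measurable (m v : ℝ) : Measurable (gaussPdf m v) := by
  unfold gaussPdf
  exact (((measurable_id.sub_const m).pow_const 2).neg.div_const _).exp.const_mul _

lemma gaussPdf_le {Δ : ℝ} (hΔ : 0 < Δ) (z : ℝ) :
    gaussPdf 0 Δ z ≤ (Real.sqrt (2 * Real.pi * Δ))⁻¹ := by
  have hpi := Real.pi_pos
  unfold gaussPdf
  have h1 : Real.exp (-((z - 0) ^ 2) / (2 * Δ)) ≤ 1 :=
    Real.exp_le_one_iff.mpr
      (div_nonpos_of_nonpos_of_nonneg (neg_nonpos.mpr (sq_nonneg _)) (by linarith))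
  nlinarith [inv_nonneg.mpr (Real.sqrt_nonneg (2 * Real.pi * Δ))]

lemma integrable_comp_sub {f : ℝ → ℝ} (hf : Integrable f) (y : ℝ) :
    Integrable (fun z => f (y - z)) := by
  have := (hf.comp_neg).comp_sub_right y
  simpa [neg_sub] using this

lemma gauss_prod (m : ℝ) {v w : ℝ} (hv : 0 < v) (hw : 0 < w) (y z : ℝ) :
    gaussPdf m v (y - z) * gaussPdf 0 w z
      = gaussPdf m (v + w) y * gaussPdf (w * (y - m) / (v + w)) (v * w / (v + w)) z := by
  have hvw : 0 < v + w := by linarith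
  have hpi := Real.pi_pos
  unfold gaussPdf
  have hconst : (Real.sqrt (2 * Real.pi * v))⁻¹ * (Real.sqrt (2 * Real.pi * w))⁻¹
      = (Real.sqrt (2 * Real.pi * (v + w)))⁻¹ *
        (Real.sqrt (2 * Real.pi * (v * w / (v + w))))⁻¹ := by
    rw [← mul_inv, ← mul_inv, ← Real.sqrt_mul (by positivity), ← Real.sqrt_mul (by positivity)]
    congr 1
    field_simp
  have hexp : -((y - z - m) ^ 2) / (2 * v) + -(z - 0) ^ 2 / (2 * w)
      = -((y - m) ^ 2) / (2 * (v + w)) +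
        -((z - w * (y - m) / (v + w)) ^ 2) / (2 * (v * w / (v + w))) := by
    field_simp
    ring
  calc (Real.sqrt (2 * Real.pi * v))⁻¹ * Real.exp (-(y - z - m) ^ 2 / (2 * v)) *
        ((Real.sqrt (2 * Real.pi * w))⁻¹ * Real.exp (-(z - 0) ^ 2 / (2 * w)))
      = ((Real.sqrt (2 * Real.pi * v))⁻¹ * (Real.sqrt (2 * Real.pi * w))⁻¹) *
        Real.exp (-((y - z - m) ^ 2) / (2 * v) + -(z - 0) ^ 2 / (2 * w)) := by
        rw [Real.exp_add]; ring
    _ = _ := by rw [hconst, hexp, Real.exp_add]; ring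

lemma gauss_conv (m : ℝ) {v w : ℝ} (hv : 0 < v) (hw : 0 < w) (y : ℝ) :
    ∫ z, gaussPdf m v (y - z) * gaussPdf 0 w z = gaussPdf m (v + w) y := by
  have hvw : 0 < v * w / (v + w) := by positivity
  simp_rw [gauss_prod m hv hw y]
  rw [MeasureTheory.integral_const_mul, gaussPdf_integral _ hvw, mul_one]

lemma Pcorrect_eq (μa σa2 p p' t : ℝ) (hσ : 0 < σa2) (ht : 0 < t) :
    Pcorrect μa σa2 p p' t
      = ∫ y, max (p * gaussPdf μa (σa2 + t) y) (p' * gaussPdf 0 t y) := by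
  have h2 : (0:ℝ) < σa2 + t := by linarith
  set R := {y : ℝ | p' * gaussPdf 0 t y ≤ p * gaussPdf μa (σa2 + t) y} with hRdef
  have hR : MeasurableSet R :=
    measurableSet_le ((gaussPdf_measurable 0 t).const_mul p')
      ((gaussPdf_measurable μa (σa2 + t)).const_mul p)
  have hF : Integrable (fun y => max (p * gaussPdf μa (σa2 + t) y) (p' * gaussPdf 0 t y)) := by
    simpa [Pi.sup_def] using
      ((gaussPdf_integrable μa h2.le).const_mul p).sup ((gaussPdf_integrable 0 ht.le).const_mul p')
  rw [← MeasureTheory.integral_add_compl hR hF]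
  unfold Pcorrect
  congr 1
  · rw [← MeasureTheory.integral_const_mul]
    refine setIntegral_congr_fun hR fun y hy => ?_
    exact (max_eq_left hy).symm
  · rw [← MeasureTheory.integral_const_mul]
    refine setIntegral_congr_fun hR.compl fun y hy => ?_
    have hy' : ¬ p' * gaussPdf 0 t y ≤ p * gaussPdf μa (σa2 + t) y := hy
    exact (max_eq_right (not_le.mp hy').le).symm

/-- Two-class case of Proposition 2: the probability of correct MAP
classification is monotonically nonincreasing in the noise variance `τ²`
(equivalently, nondecreasing as the sensing effort `λ` increases). -/
theorem stmt_19 (μa σa2 p p' : ℝ) (hμa : 0 < μa) (hσa2 : 0 < σa2)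
    (hp : 0 < p) (hp' : 0 < p') (hpp : p + p' = 1)
    (τ2 τ2' : ℝ) (hτ2 : 0 < τ2) (hle : τ2 ≤ τ2') :
    Pcorrect μa σa2 p p' τ2' ≤ Pcorrect μa σa2 p p' τ2 := by
  rcases eq_or_lt_of_le hle with rfl | hlt
  · exact le_refl _
  obtain ⟨Δ, hΔ, rfl⟩ : ∃ Δ, 0 < Δ ∧ τ2' = τ2 + Δ := ⟨τ2' - τ2, by linarith, by ring⟩
  have hσt : (0:ℝ) < σa2 + τ2 := by linarith
  have ht' : (0:ℝ) < τ2 + Δ := by linarith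
  set F : ℝ → ℝ := fun y => max (p * gaussPdf μa (σa2 + τ2) y) (p' * gaussPdf 0 τ2 y) with hFdef
  set g : ℝ → ℝ := gaussPdf 0 Δ with hgdef
  have hFint : Integrable F := by
    simpa [hFdef, Pi.sup_def] using
      ((gaussPdf_integrable μa hσt.le).const_mul p).sup
        ((gaussPdf_integrable 0 hτ2.le).const_mul p')
  have hF'int : Integrable
      (fun y => max (p * gaussPdf μa (σa2 + (τ2 + Δ)) y) (p' * gaussPdf 0 (τ2 + Δ) y)) := by
    simpa [Pi.sup_def] using
      ((gaussPdf_integrable μa (by linarith : (0:ℝ) ≤ σa2 + (τ2 + Δ))).const_mul p).sup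
        ((gaussPdf_integrable 0 ht'.le).const_mul p')
  have hgint : Integrable g := gaussPdf_integrable 0 hΔ.le
  have hgmeas : AEStronglyMeasurable g volume :=
    (gaussPdf_measurable 0 Δ).aestronglyMeasurable
  have hgbd : ∃ C, ∀ z, ‖g z‖ ≤ C :=
    ⟨(Real.sqrt (2 * Real.pi * Δ))⁻¹, fun z => by
      rw [Real.norm_of_nonneg (gaussPdf_nonneg 0 hΔ.le z)]
      exact gaussPdf_le hΔ z⟩
  have hgnn : ∀ z, 0 ≤ g z := gaussPdf_nonneg 0 hΔ.le
  -- the convolution g ⋆ F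
  set c : ℝ → ℝ := g ⋆[ContinuousLinearMap.mul ℝ ℝ] F with hcdef
  have hcint : Integrable c :=
    hgint.integrable_convolution (ContinuousLinearMap.mul ℝ ℝ) hFint
  have hcy : ∀ y, c y = ∫ z, g z * F (y - z) := fun y => by
    simp [hcdef, convolution_def]
  -- pointwise key bound
  have key : ∀ y, max (p * gaussPdf μa (σa2 + (τ2 + Δ)) y) (p' * gaussPdf 0 (τ2 + Δ) y) ≤ c y := by
    intro y
    have hintc : Integrable (fun z => g z * F (y - z)) :=
      Integrable.bdd_mul (integrable_comp_sub hFint y) hgmeas (Filter.Eventually.of_forall hgbd.choose_spec)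
    have bound : ∀ (m : ℝ) (q : ℝ) (v : ℝ), 0 < v → 0 < q →
        (∀ z, q * gaussPdf m v (y - z) ≤ F (y - z)) →
        q * gaussPdf m (v + Δ) y ≤ c y := by
      intro m q v hv hq hle'
      have e1 : q * gaussPdf m (v + Δ) y = ∫ z, g z * (q * gaussPdf m v (y - z)) := by
        rw [← gauss_conv m hv hΔ y, ← MeasureTheory.integral_const_mul]
        congr 1
        funext z
        ring
      rw [e1, hcy y]
      have hint1 : Integrable (fun z => g z * (q * gaussPdf m v (y - z))) :=
        Integrable.bdd_mul
          (integrable_comp_sub ((gaussPdf_integrable m hv.le).const_mul q) y) hgmeas (Filter.Eventually.of_forall hgbd.choose_spec)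
      exact integral_mono hint1 hintc fun z =>
        mul_le_mul_of_nonneg_left (hle' z) (hgnn z)
    refine max_le ?_ ?_
    · have : σa2 + (τ2 + Δ) = (σa2 + τ2) + Δ := by ring
      rw [this]
      exact bound μa p (σa2 + τ2) hσt hp fun z => le_max_left _ _
    · exact bound 0 p' τ2 hτ2 hp' fun z => le_max_right _ _
  rw [Pcorrect_eq μa σa2 p p' (τ2 + Δ) hσa2 ht', Pcorrect_eq μa σa2 p p' τ2 hσa2 hτ2]
  calc ∫ y, max (p * gaussPdf μa (σa2 + (τ2 + Δ)) y) (p' * gaussPdf 0 (τ2 + Δ) y)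
      ≤ ∫ y, c y := integral_mono hF'int hcint key
    _ = ∫ y, F y := by
        rw [hcdef, integral_convolution (ContinuousLinearMap.mul ℝ ℝ) hgint hFint,
          gaussPdf_integral 0 hΔ]
        simp
end
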